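/- Let A be an (n+1)×(n+1) matrix-valued function on ℝ^{n+1} with entries Hölder continuous with exponent α ∈ (0,1] and constant C_h, satisfying A(x_R) = Id for some point x_R, and with |A(x) − Id| ≤ C ℓ^α for all x in a ball of radius comparable to ℓ around x_R. Fix d = Δℓ with Δ ∈ (0,1). Define, for 0 ≤ x_{n+1} ≤ d, B(x) = A(x)(x_{n+1}/d) + Id(1 − x_{n+1}/d), and B(x) = A(x) for x_{n+1} ≥ d. Then, provided ℓ^{α/2} ≤ Δ^α, the matrix B is Hölder continuous with exponent α/2 on the slab {0 ≤ x_{n+1}} ∩ B(x_R, Cℓ), with constant depending only on C_h, C and n; specifically, for 0 ≤ x_{n+1}, y_{n+1} ≤ d one has |B(x) − B(y)| ≤ C'|x−y|^{α/2}. -/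

import Mathlib

open Matrix

lemma coord_abs_le_norm {m : ℕ} (v : EuclideanSpace ℝ (Fin m)) (k : Fin m) :
    |v k| ≤ ‖v‖ := by
  rw [EuclideanSpace.norm_eq]
  have h1 : |v k| = Real.sqrt (‖v k‖ ^ 2) := by
    rw [Real.sqrt_sq_eq_abs]; simp [abs_abs]
  rw [h1]
  apply Real.sqrt_le_sqrt
  exact Finset.single_le_sum (f := fun i => ‖v i‖ ^ 2) (fun i _ => by positivity)
    (Finset.mem_univ k)

/-- Interpolating an elliptic Hölder matrix with the identity across a slab of width
`d = Δℓ` only loses half of the Hölder exponent when `ℓ^{α/2} ≤ Δ^α`. -/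
theorem stmt_3 (n : ℕ) (C_h C : ℝ) (hCh : 0 < C_h) (hC : 0 < C) :
    ∃ C' : ℝ, 0 < C' ∧
      ∀ (α : ℝ), 0 < α → α ≤ 1 →
      ∀ (Δ : ℝ), 0 < Δ → Δ < 1 →
      ∀ (ℓ : ℝ), 0 < ℓ →
      ∀ (A : EuclideanSpace ℝ (Fin (n + 1)) → Matrix (Fin (n + 1)) (Fin (n + 1)) ℝ)
        (x_R : EuclideanSpace ℝ (Fin (n + 1))),
      (∀ x y, ∀ i j, |A x i j - A y i j| ≤ C_h * ‖x - y‖ ^ α) →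
      A x_R = 1 →
      (∀ x ∈ Metric.closedBall x_R (C * ℓ), ∀ i j,
        |A x i j - (1 : Matrix (Fin (n + 1)) (Fin (n + 1)) ℝ) i j| ≤ C * ℓ ^ α) →
      ℓ ^ (α / 2) ≤ Δ ^ α →
      ∀ x ∈ Metric.closedBall x_R (C * ℓ), ∀ y ∈ Metric.closedBall x_R (C * ℓ),
        0 ≤ x (Fin.last n) → x (Fin.last n) ≤ Δ * ℓ →
        0 ≤ y (Fin.last n) → y (Fin.last n) ≤ Δ * ℓ →
        ∀ i j,
          |((x (Fin.last n) / (Δ * ℓ)) • A x +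
              (1 - x (Fin.last n) / (Δ * ℓ)) • (1 : Matrix (Fin (n + 1)) (Fin (n + 1)) ℝ)) i j -
            ((y (Fin.last n) / (Δ * ℓ)) • A y +
              (1 - y (Fin.last n) / (Δ * ℓ)) • (1 : Matrix (Fin (n + 1)) (Fin (n + 1)) ℝ)) i j|
            ≤ C' * ‖x - y‖ ^ (α / 2) := by
  refine ⟨C_h * (1 + 2 * C) + C, by positivity, ?_⟩
  intro α hα hα1 Δ hΔ hΔ1 ℓ hℓ A x_R hHol hAxR hnear hsmall x hx y hy hx0 hx1 hy0 hy1 i j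
  have hd : 0 < Δ * ℓ := mul_pos hΔ hℓ
  set t : ℝ := x (Fin.last n) / (Δ * ℓ) with ht_def
  set s : ℝ := y (Fin.last n) / (Δ * ℓ) with hs_def
  have ht0 : 0 ≤ t := div_nonneg hx0 hd.le
  have ht1 : t ≤ 1 := (div_le_one hd).2 hx1
  have hs0 : 0 ≤ s := div_nonneg hy0 hd.le
  have hs1 : s ≤ 1 := (div_le_one hd).2 hy1
  set u : ℝ := ‖x - y‖ with hu_def
  have hu0 : 0 ≤ u := norm_nonneg _
  rcases eq_or_lt_of_le hu0 with hu | hu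
  · -- x = y
    have hxy : x = y := by
      have := norm_sub_eq_zero_iff.mp hu.symm
      exact this
    subst hxy
    simp only [sub_self, abs_zero]
    rw [show s = t from rfl]; simp only [sub_self, abs_zero]; positivity
  -- u > 0
  have hℓ1 : ℓ ≤ 1 := by
    by_contra h
    push_neg at h
    have h1 : (1:ℝ) < ℓ ^ (α / 2) := Real.one_lt_rpow_iff_of_pos hℓ |>.2 (Or.inl ⟨h, by positivity⟩)
    have h2 : Δ ^ α < 1 := Real.rpow_lt_one hΔ.le hΔ1 hα
    linarith
  have hu2C : u ≤ 2 * (C * ℓ) := by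
    have h1 : dist x y ≤ dist x x_R + dist x_R y := dist_triangle _ _ _
    have h2 : dist x x_R ≤ C * ℓ := Metric.mem_closedBall.mp hx
    have h3 : dist x_R y ≤ C * ℓ := by
      rw [dist_comm]; exact Metric.mem_closedBall.mp hy
    have : dist x y = u := by rw [dist_eq_norm]
    linarith
  set r : ℝ := u ^ (α / 2) with hr_def
  have hr0 : 0 < r := Real.rpow_pos_of_pos hu _
  -- coordinate bound
  have hcoord : |x (Fin.last n) - y (Fin.last n)| ≤ u := by
    have := coord_abs_le_norm (x - y) (Fin.last n)
    simpa using this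
  -- key: ℓ^(α/2) ≤ Δ^(α/2)
  have hkey : ℓ ^ (α / 2) ≤ Δ ^ (α / 2) := by
    calc ℓ ^ (α / 2) ≤ Δ ^ α := hsmall
    _ ≤ Δ ^ (α / 2) := Real.rpow_le_rpow_of_exponent_ge hΔ hΔ1.le (by linarith)
  -- ℓ^α ≤ (Δ*ℓ)^(α/2)
  have hla : ℓ ^ α ≤ (Δ * ℓ) ^ (α / 2) := by
    have h1 : ℓ ^ α = ℓ ^ (α / 2) * ℓ ^ (α / 2) := by
      rw [← Real.rpow_add hℓ]; ring_nf
    rw [h1, Real.mul_rpow hΔ.le hℓ.le]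
    exact mul_le_mul_of_nonneg_right hkey (by positivity)
  -- rewrite entry difference
  have hentry : ((t • A x + (1 - t) • (1 : Matrix (Fin (n + 1)) (Fin (n + 1)) ℝ)) i j -
      (s • A y + (1 - s) • (1 : Matrix (Fin (n + 1)) (Fin (n + 1)) ℝ)) i j)
      = t * (A x i j - A y i j) + (t - s) * (A y i j - (1 : Matrix (Fin (n + 1)) (Fin (n + 1)) ℝ) i j) := by
    simp only [Matrix.add_apply, Matrix.smul_apply, smul_eq_mul]
    ring
  rw [hentry]
  have hbound1 : |t * (A x i j - A y i j)| ≤ C_h * (1 + 2 * C) * r := by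
    rw [abs_mul]
    have h1 : |A x i j - A y i j| ≤ C_h * u ^ α := hHol x y i j
    have h2 : |t| ≤ 1 := by rw [abs_of_nonneg ht0]; exact ht1
    have h3 : u ^ α = r * r := by
      rw [hr_def, ← Real.rpow_add hu]; ring_nf
    have h4 : r ≤ 1 + 2 * C := by
      rcases le_or_gt u 1 with h | h
      · have : r ≤ 1 := Real.rpow_le_one hu0 h (by positivity)
        linarith
      · have h5 : r ≤ u := by
          calc r = u ^ (α / 2) := rfl
          _ ≤ u ^ (1:ℝ) := Real.rpow_le_rpow_of_exponent_le h.le (by linarith)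
          _ = u := Real.rpow_one u
        have h6 : 2 * (C * ℓ) ≤ 2 * C := by nlinarith
        linarith
    calc |t| * |A x i j - A y i j| ≤ 1 * (C_h * (r * r)) := by
          rw [← h3]; exact mul_le_mul h2 h1 (abs_nonneg _) zero_le_one
    _ = C_h * r * r := by ring
    _ ≤ C_h * (1 + 2 * C) * r := by nlinarith [mul_le_mul_of_nonneg_left h4 (mul_pos hCh hr0).le]
  have hbound2 : |(t - s) * (A y i j - (1 : Matrix (Fin (n + 1)) (Fin (n + 1)) ℝ) i j)| ≤ C * r := by
    rw [abs_mul]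
    have hAy : |A y i j - (1 : Matrix (Fin (n + 1)) (Fin (n + 1)) ℝ) i j| ≤ C * ℓ ^ α :=
      hnear y hy i j
    rcases le_or_gt u (Δ * ℓ) with hcase | hcase
    · -- small u: |t - s| ≤ u / (Δ*ℓ), and u ≤ r * (Δ*ℓ)^(1-α/2)
      have hts : |t - s| ≤ u / (Δ * ℓ) := by
        rw [ht_def, hs_def, div_sub_div_same, abs_div, abs_of_pos hd]
        gcongr
      have hur : u ≤ r * (Δ * ℓ) ^ (1 - α / 2) := by
        have h1 : u = u ^ (α / 2) * u ^ (1 - α / 2) := by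
          rw [← Real.rpow_add hu]; ring_nf; rw [Real.rpow_one]
        rw [h1]
        exact mul_le_mul_of_nonneg_left
          (Real.rpow_le_rpow hu0 hcase (by linarith)) (by positivity)
      have hstep : (Δ * ℓ) ^ (1 - α / 2) * ℓ ^ α ≤ Δ * ℓ := by
        calc (Δ * ℓ) ^ (1 - α / 2) * ℓ ^ α ≤ (Δ * ℓ) ^ (1 - α / 2) * (Δ * ℓ) ^ (α / 2) :=
              mul_le_mul_of_nonneg_left hla (by positivity)
        _ = (Δ * ℓ) ^ ((1 - α / 2) + α / 2) := (Real.rpow_add hd _ _).symm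
        _ = Δ * ℓ := by norm_num
      calc |t - s| * |A y i j - (1 : Matrix (Fin (n + 1)) (Fin (n + 1)) ℝ) i j|
          ≤ (u / (Δ * ℓ)) * (C * ℓ ^ α) :=
            mul_le_mul hts hAy (abs_nonneg _) (by positivity)
      _ ≤ ((r * (Δ * ℓ) ^ (1 - α / 2)) / (Δ * ℓ)) * (C * ℓ ^ α) := by
            apply mul_le_mul_of_nonneg_right _ (by positivity)
            gcongr
      _ = C * r * ((Δ * ℓ) ^ (1 - α / 2) * ℓ ^ α / (Δ * ℓ)) := by ring
      _ ≤ C * r * 1 := by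
            apply mul_le_mul_of_nonneg_left _ (by positivity)
            rw [div_le_one hd]; exact hstep
      _ = C * r := by ring
    · -- large u: |t - s| ≤ 1, ℓ^α ≤ r
      have hts : |t - s| ≤ 1 := by
        rw [abs_sub_le_iff]; constructor <;> linarith
      have hlr : ℓ ^ α ≤ r := by
        calc ℓ ^ α ≤ (Δ * ℓ) ^ (α / 2) := hla
        _ ≤ u ^ (α / 2) := Real.rpow_le_rpow hd.le hcase.le (by positivity)
      calc |t - s| * |A y i j - (1 : Matrix (Fin (n + 1)) (Fin (n + 1)) ℝ) i j|
          ≤ 1 * (C * ℓ ^ α) := mul_le_mul hts hAy (abs_nonneg _) zero_le_one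
      _ = C * ℓ ^ α := by ring
      _ ≤ C * r := mul_le_mul_of_nonneg_left hlr hC.le
  calc |t * (A x i j - A y i j) + (t - s) * (A y i j - (1 : Matrix (Fin (n + 1)) (Fin (n + 1)) ℝ) i j)|
      ≤ |t * (A x i j - A y i j)| + |(t - s) * (A y i j - (1 : Matrix (Fin (n + 1)) (Fin (n + 1)) ℝ) i j)| :=
        abs_add_le _ _
  _ ≤ C_h * (1 + 2 * C) * r + C * r := add_le_add hbound1 hbound2
  _ = (C_h * (1 + 2 * C) + C) * r := by ring
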